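/- Let γ ∈ (0,1) and define, for a probability measure f on [-1,1], the quadratic tendency-to-compromise kernel Q[f] by (Q[f],φ) = ∬[φ(x + γ(x_* − x)) − φ(x)] df(x) df(x_*) for continuous φ. Then Q[f] has zero mass and zero mean, (Q[f],1) = 0 and (Q[f],x) = 0, and its second moment satisfies the exact identity (Q[f], x²) = −2γ(1−γ) Var[f]; in particular (Q[f],x²) ≤ −λ Var[f] with λ = 2γ(1−γ) > 0. -/

import Mathlib

/-!
The quadratic tendency-to-compromise kernel has zero mass and mean, and is contractive with
`λ = 2γ(1-γ)`.
-/

open MeasureTheory Set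

noncomputable section

/-- The tendency-to-compromise kernel, paired with a test function:
`(Q[f,h],φ) = ∬ [φ(x + γ(y - x)) - φ(x)] df(x) dh(y)`; the quadratic kernel is `Q[f] = Q[f,f]`. -/
def Qc (γ : ℝ) (f h : Measure ℝ) (φ : ℝ → ℝ) : ℝ :=
  ∫ x, ∫ y, (φ (x + γ * (y - x)) - φ x) ∂h ∂f

/-- Variance of a (probability) measure on `ℝ`. -/
def var (f : Measure ℝ) : ℝ := (∫ x, x ^ 2 ∂f) - (∫ x, x ∂f) ^ 2

/-- **Properties of the quadratic compromise kernel.** For `γ ∈ (0,1)` and any probability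
measure `f` on `[-1,1]`: `(Q[f],1) = 0`, `(Q[f],x) = 0`, `(Q[f],x²) = -2γ(1-γ)Var[f]`; in
particular `(Q[f],x²) ≤ -λ Var[f]` with `λ = 2γ(1-γ) > 0`. -/
theorem quadratic_compromise_kernel_properties (γ : ℝ) (hγ : γ ∈ Ioo (0 : ℝ) 1)
    (f : Measure ℝ) (hprob : IsProbabilityMeasure f)
    (hsupp : f (Icc (-1 : ℝ) 1)ᶜ = 0) :
    Qc γ f f (fun _ => 1) = 0 ∧
    Qc γ f f (fun x => x) = 0 ∧
    Qc γ f f (fun x => x ^ 2) = -(2 * γ * (1 - γ)) * var f ∧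
    Qc γ f f (fun x => x ^ 2) ≤ -(2 * γ * (1 - γ)) * var f ∧
    0 < 2 * γ * (1 - γ) := by
  obtain ⟨hγ0, hγ1⟩ := hγ
  have hae : ∀ᵐ x ∂f, x ∈ Icc (-1:ℝ) 1 := ae_iff.mpr hsupp
  have hI1 : Integrable (fun x : ℝ => x) f :=
    (integrable_const (1:ℝ)).mono' measurable_id.aestronglyMeasurable
      (hae.mono fun x hx => by
        rw [Real.norm_eq_abs]; exact abs_le.2 ⟨hx.1, hx.2⟩)
  have hI2 : Integrable (fun x : ℝ => x ^ 2) f :=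
    (integrable_const (1:ℝ)).mono' ((measurable_id.pow_const 2)).aestronglyMeasurable
      (hae.mono fun x hx => by
        rw [Real.norm_eq_abs, abs_pow]
        calc |x| ^ 2 ≤ 1 ^ 2 := by
              exact pow_le_pow_left₀ (abs_nonneg x) (abs_le.2 ⟨hx.1, hx.2⟩) 2
          _ = 1 := one_pow 2)
  set m := ∫ x, x ∂f with hm
  set s := ∫ x, x ^ 2 ∂f with hs
  have key : ∀ a b c : ℝ, ∫ x, (a + b * x + c * x ^ 2) ∂f = a + b * m + c * s := by
    intro a b c
    have hab : Integrable (fun x : ℝ => a + b * x) f := (integrable_const a).add (hI1.const_mul b)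
    rw [integral_add hab (hI2.const_mul c),
        integral_add (integrable_const a) (hI1.const_mul b),
        integral_const, integral_const_mul, integral_const_mul]
    simp [hm, hs]
  have h1 : Qc γ f f (fun _ => 1) = 0 := by simp [Qc]
  have h2 : Qc γ f f (fun x => x) = 0 := by
    have inner : ∀ x : ℝ, (∫ y, (x + γ * (y - x) - x) ∂f) = γ * m - γ * x := by
      intro x
      have h := key (-(γ * x)) γ 0
      rw [show (fun y : ℝ => x + γ * (y - x) - x) = fun y : ℝ => (-(γ * x)) + γ * y + 0 * y ^ 2
        from funext fun y => by ring]
      rw [h]; ring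
    have heq : Qc γ f f (fun x => x) = ∫ x, (γ * m - γ * x) ∂f := by
      unfold Qc
      exact integral_congr_ae (Filter.Eventually.of_forall inner)
    rw [heq, show (fun x : ℝ => γ * m - γ * x) = fun x : ℝ => (γ * m) + (-γ) * x + 0 * x ^ 2
      from funext fun x => by ring, key]
    ring
  have h3 : Qc γ f f (fun x => x ^ 2) = -(2 * γ * (1 - γ)) * var f := by
    have inner : ∀ x : ℝ,
        (∫ y, ((x + γ * (y - x)) ^ 2 - x ^ 2) ∂f)
          = ((1 - γ) ^ 2 * x ^ 2 - x ^ 2) + 2 * (1 - γ) * γ * x * m + γ ^ 2 * s := by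
      intro x
      have h := key ((1 - γ) ^ 2 * x ^ 2 - x ^ 2) (2 * (1 - γ) * γ * x) (γ ^ 2)
      rw [show (fun y : ℝ => (x + γ * (y - x)) ^ 2 - x ^ 2)
          = fun y : ℝ => ((1 - γ) ^ 2 * x ^ 2 - x ^ 2) + (2 * (1 - γ) * γ * x) * y + γ ^ 2 * y ^ 2
        from funext fun y => by ring]
      rw [h]
    have heq : Qc γ f f (fun x => x ^ 2)
        = ∫ x, (((1 - γ) ^ 2 * x ^ 2 - x ^ 2) + 2 * (1 - γ) * γ * x * m + γ ^ 2 * s) ∂f := by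
      unfold Qc
      exact integral_congr_ae (Filter.Eventually.of_forall inner)
    rw [heq, show (fun x : ℝ => ((1 - γ) ^ 2 * x ^ 2 - x ^ 2) + 2 * (1 - γ) * γ * x * m + γ ^ 2 * s)
        = fun x : ℝ => (γ ^ 2 * s) + (2 * (1 - γ) * γ * m) * x + ((1 - γ) ^ 2 - 1) * x ^ 2
      from funext fun x => by ring, key]
    unfold var
    rw [← hm, ← hs]
    ring
  exact ⟨h1, h2, h3, h3.le, mul_pos (mul_pos two_pos hγ0) (by linarith)⟩
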